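/- arXiv:1311.0717 — 4 statements merged into one kernel-verified Lean document; each statement's English description precedes it below -/
import Mathlib

section
/- Let a and b be nonzero integers. Then there exist infinitely many quadruples (x, y, z, w) of polynomials in ℤ[t] with gcd(x, y, z, w) = 1 satisfying a·(x² − y⁶) = b·(z⁶ − w⁶) and z⁶ ≠ w⁶ (as polynomials). -/
open Polynomial

/-- Let `a` and `b` be nonzero integers. Then there exist infinitely many quadruples
`(x, y, z, w)` of polynomials in `ℤ[t]` with `gcd(x, y, z, w) = 1` (i.e. every common
divisor of the four polynomials is a unit) satisfying `a*(x^2 - y^6) = b*(z^6 - w^6)`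
and `z^6 ≠ w^6` as polynomials. -/
theorem stmt_0 (a b : ℤ) (ha : a ≠ 0) (hb : b ≠ 0) :
    {q : ℤ[X] × ℤ[X] × ℤ[X] × ℤ[X] |
      C a * (q.1 ^ 2 - q.2.1 ^ 6) = C b * (q.2.2.1 ^ 6 - q.2.2.2 ^ 6) ∧
      q.2.2.1 ^ 6 ≠ q.2.2.2 ^ 6 ∧
      ∀ d : ℤ[X], d ∣ q.1 → d ∣ q.2.1 → d ∣ q.2.2.1 → d ∣ q.2.2.2 → IsUnit d}.Infinite := by
  -- the family, indexed by n : ℕ, with m = n+1 :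
  -- x = 16 b³ m³ (110592 a² b¹⁰ m¹² + 5), y = 4 b m,
  -- z = 1 + 192 a b⁵ m⁶, w = 1 - 192 a b⁵ m⁶
  apply Set.infinite_of_injective_forall_mem
    (f := fun n : ℕ =>
      ((C (16 * b ^ 3 * ((n : ℤ) + 1) ^ 3 *
            (110592 * a ^ 2 * b ^ 10 * ((n : ℤ) + 1) ^ 12 + 5)) : ℤ[X]),
       (C (4 * b * ((n : ℤ) + 1)) : ℤ[X]),
       (C (1 + 192 * a * b ^ 5 * ((n : ℤ) + 1) ^ 6) : ℤ[X]),
       (C (1 - 192 * a * b ^ 5 * ((n : ℤ) + 1) ^ 6) : ℤ[X])))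
  · -- injectivity
    intro n₁ n₂ h
    have h2 : (C (4 * b * ((n₁ : ℤ) + 1)) : ℤ[X]) = C (4 * b * ((n₂ : ℤ) + 1)) :=
      congrArg (fun q : ℤ[X] × ℤ[X] × ℤ[X] × ℤ[X] => q.2.1) h
    have h3 : 4 * b * ((n₁ : ℤ) + 1) = 4 * b * ((n₂ : ℤ) + 1) := C_injective h2
    have hb4 : (4 * b : ℤ) ≠ 0 := mul_ne_zero (by norm_num) hb
    have h4 : ((n₁ : ℤ) + 1) = ((n₂ : ℤ) + 1) := by
      rcases mul_eq_zero.mp (by linear_combination h3 : 4 * b * (((n₁:ℤ)+1) - ((n₂:ℤ)+1)) = 0) with h | h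
      · exact absurd h hb4
      · linarith
    exact_mod_cast (by omega : (n₁ : ℤ) = n₂ → n₁ = n₂) (by linarith)
  · -- membership
    intro n
    set m : ℤ := (n : ℤ) + 1 with hm
    have hmne : m ≠ 0 := by positivity
    refine ⟨?_, ?_, ?_⟩
    · -- the equation
      show C a * (C (16 * b ^ 3 * m ^ 3 * (110592 * a ^ 2 * b ^ 10 * m ^ 12 + 5)) ^ 2
            - C (4 * b * m) ^ 6)
          = C b * (C (1 + 192 * a * b ^ 5 * m ^ 6) ^ 6 - C (1 - 192 * a * b ^ 5 * m ^ 6) ^ 6)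
      rw [← map_pow, ← map_pow, ← map_pow, ← map_pow, ← map_sub, ← map_sub, ← map_mul, ← map_mul]
      exact congrArg C (by ring)
    · -- nontriviality z⁶ ≠ w⁶
      show (C (1 + 192 * a * b ^ 5 * m ^ 6) : ℤ[X]) ^ 6
          ≠ (C (1 - 192 * a * b ^ 5 * m ^ 6)) ^ 6
      rw [← map_pow, ← map_pow]
      intro hc
      have h6 : (1 + 192 * a * b ^ 5 * m ^ 6) ^ 6 = (1 - 192 * a * b ^ 5 * m ^ 6) ^ 6 :=
        C_injective hc
      set E : ℤ := 192 * a * b ^ 5 * m ^ 6 with hE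
      have hEne : E ≠ 0 := by
        have : (192 : ℤ) ≠ 0 := by norm_num
        exact mul_ne_zero (mul_ne_zero (mul_ne_zero this ha) (pow_ne_zero 5 hb))
          (pow_ne_zero 6 hmne)
      have hfac : 4 * E * ((1 + E) ^ 4 + (1 + E) ^ 2 * (1 - E) ^ 2 + (1 - E) ^ 4) = 0 := by
        linear_combination h6
      clear hE h6 hc; clear_value E
      rcases mul_eq_zero.mp hfac with h | h
      · rcases mul_eq_zero.mp h with h' | h'
        · norm_num at h'
        · exact hEne h'
      · have hu2 : (1 + E) ^ 2 = 0 := by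
          nlinarith [sq_nonneg ((1 + E) ^ 2), sq_nonneg ((1 - E) ^ 2), sq_nonneg ((1 + E) * (1 - E))]
        have hv2 : (1 - E) ^ 2 = 0 := by
          nlinarith [sq_nonneg ((1 + E) ^ 2), sq_nonneg ((1 - E) ^ 2), sq_nonneg ((1 + E) * (1 - E))]
        nlinarith [sq_nonneg (1 + E), sq_nonneg (1 - E)]
    · -- coprimality
      intro d hx hy hz hw
      apply isUnit_of_dvd_one
      have key : (C (1 + 192 * a * b ^ 5 * m ^ 6) : ℤ[X])
          - C (48 * a * b ^ 4 * m ^ 5) * C (4 * b * m) = 1 := by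
        rw [← map_mul, ← map_sub]
        have : (1 + 192 * a * b ^ 5 * m ^ 6) - (48 * a * b ^ 4 * m ^ 5) * (4 * b * m) = 1 := by
          ring
        rw [this, map_one]
      calc d ∣ (C (1 + 192 * a * b ^ 5 * m ^ 6) : ℤ[X])
              - C (48 * a * b ^ 4 * m ^ 5) * C (4 * b * m) :=
            dvd_sub hz (Dvd.dvd.mul_left hy _)
        _ = 1 := key
end

section
/- Let a and b be nonzero coprime integers. Then there exist infinitely many quadruples (x, y, z, w) of integers with gcd(x, y, z, w) = 1 satisfying a·(x² − y⁶) = b·(z⁶ − w⁶) and z⁶ ≠ w⁶. -/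
private lemma aux_stmt3 (a b : ℤ) (ha : a ≠ 0) (hb : b ≠ 0) (m : ℕ) (hm : 1 ≤ m) :
    ∃ q : ℤ × ℤ × ℤ × ℤ,
      (a * (q.1 ^ 2 - q.2.1 ^ 6) = b * (q.2.2.1 ^ 6 - q.2.2.2 ^ 6) ∧
       q.2.2.1 ^ 6 ≠ q.2.2.2 ^ 6 ∧
       Int.gcd (Int.gcd (Int.gcd q.1 q.2.1) q.2.2.1) q.2.2.2 = 1) ∧
      m ≤ q.2.1.natAbs ∧ q.2.1.natAbs ≤ 2 * b.natAbs * m := by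
  have hM0 : (m : ℤ) ≠ 0 := by positivity
  set M : ℤ := (m : ℤ) with hMdef
  set Z : ℤ := -(3 * a * M ^ 6 + b) with hZdef
  set W : ℤ := 3 * a * M ^ 6 - b with hWdef
  set Y : ℤ := 2 * b * M with hYdef
  have hYne : Y ≠ 0 := by
    rw [hYdef]
    exact mul_ne_zero (mul_ne_zero two_ne_zero hb) hM0
  set g : ℕ := Int.gcd (Int.gcd Z W) Y with hgdef
  have hg0 : g ≠ 0 := by
    intro h
    exact hYne (Int.gcd_eq_zero_iff.mp h).2
  have hgpos : 0 < g := Nat.pos_of_ne_zero hg0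
  have hGne : (g : ℤ) ≠ 0 := by exact_mod_cast hg0
  have hdZ : (g : ℤ) ∣ Z :=
    dvd_trans (Int.gcd_dvd_left _ _) (Int.gcd_dvd_left _ _)
  have hdW : (g : ℤ) ∣ W :=
    dvd_trans (Int.gcd_dvd_left _ _) (Int.gcd_dvd_right _ _)
  have hdY : (g : ℤ) ∣ Y := (Int.gcd_dvd_right _ _)
  set z : ℤ := Z / (g : ℤ) with hzdef
  set w : ℤ := W / (g : ℤ) with hwdef
  set y : ℤ := Y / (g : ℤ) with hydef
  have hz : (g : ℤ) * z = Z := Int.mul_ediv_cancel' hdZ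
  have hw : (g : ℤ) * w = W := Int.mul_ediv_cancel' hdW
  have hy : (g : ℤ) * y = Y := Int.mul_ediv_cancel' hdY
  -- curve identity for Z W Y
  have K1 : (a * M ^ 6 - b) * Z ^ 3 + (a * M ^ 6 + b) * W ^ 3 - 2 * a * M ^ 3 * Y ^ 3 = 0 := by
    rw [hZdef, hWdef, hYdef]; ring
  have K1' : (a * M ^ 6 - b) * ((g : ℤ) * z) ^ 3 + (a * M ^ 6 + b) * ((g : ℤ) * w) ^ 3
      - 2 * a * M ^ 3 * ((g : ℤ) * y) ^ 3 = 0 := by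
    rw [hz, hw, hy]; exact K1
  have K4 : (a * M ^ 6 - b) * z ^ 3 + (a * M ^ 6 + b) * w ^ 3 - 2 * a * M ^ 3 * y ^ 3 = 0 := by
    have hGc : ((g : ℤ) ^ 3) *
        ((a * M ^ 6 - b) * z ^ 3 + (a * M ^ 6 + b) * w ^ 3 - 2 * a * M ^ 3 * y ^ 3) = 0 := by
      linear_combination K1'
    rcases mul_eq_zero.mp hGc with h | h
    · exact absurd h (pow_ne_zero 3 hGne)
    · exact h
  set x : ℤ := M ^ 3 * (z ^ 3 + w ^ 3) - y ^ 3 with hxdef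
  refine ⟨(x, y, z, w), ⟨?_, ?_, ?_⟩, ?_, ?_⟩
  · -- equation
    show a * (x ^ 2 - y ^ 6) = b * (z ^ 6 - w ^ 6)
    rw [hxdef]
    linear_combination (z ^ 3 + w ^ 3) * K4
  · -- z^6 ≠ w^6
    show z ^ 6 ≠ w ^ 6
    intro h
    have hfac : (z - w) * ((z + w) * (z ^ 4 + z ^ 2 * w ^ 2 + w ^ 4)) = 0 := by
      linear_combination h
    have hZW2b : (g : ℤ) * z + (g : ℤ) * w = -(2 * b) := by
      rw [hz, hw, hZdef, hWdef]; ring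
    rcases mul_eq_zero.mp hfac with h1 | h2
    · -- z = w : then 6 a M^6 = 0, contradiction
      have e0 : (6 : ℤ) * (a * M ^ 6) = 0 := by
        have e1 : (g : ℤ) * w - (g : ℤ) * z = 6 * a * M ^ 6 := by
          rw [hz, hw, hZdef, hWdef]; ring
        have hzw : z = w := by linarith [sub_eq_zero.mp h1]
        rw [hzw] at e1
        linarith [e1]
      exact absurd e0 (mul_ne_zero (by norm_num) (mul_ne_zero ha (pow_ne_zero _ hM0)))
    rcases mul_eq_zero.mp h2 with h3 | h4
    · -- z = -w : then 2b = 0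
      have e0 : (2 : ℤ) * b = 0 := by
        have : (g : ℤ) * (z + w) = -(2 * b) := by rw [mul_add]; exact hZW2b
        rw [h3, mul_zero] at this
        linarith
      exact absurd e0 (mul_ne_zero two_ne_zero hb)
    · -- z = w = 0 : then  2b = 0
      have hz4 : z ^ 4 = 0 := le_antisymm (by nlinarith [sq_nonneg (z * w), sq_nonneg (w ^ 2)]) (by positivity)
      have hw4 : w ^ 4 = 0 := le_antisymm (by nlinarith [sq_nonneg (z * w), sq_nonneg (z ^ 2)]) (by positivity)
      have hz0 : z = 0 := pow_eq_zero_iff (by norm_num : (4:ℕ) ≠ 0) |>.mp hz4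
      have hw0 : w = 0 := pow_eq_zero_iff (by norm_num : (4:ℕ) ≠ 0) |>.mp hw4
      have e0 : (2 : ℤ) * b = 0 := by
        rw [hz0, hw0] at hZW2b
        simpa using hZW2b.symm
      exact absurd e0 (mul_ne_zero two_ne_zero hb)
  · -- gcd = 1
    show Int.gcd (Int.gcd (Int.gcd x y) z) w = 1
    have hfac : Int.gcd (Int.gcd Z W) Y = g * Int.gcd (Int.gcd z w) y := by
      rw [← hz, ← hw, ← hy, Int.gcd_mul_left, Int.natAbs_natCast]
      have : ((g * Int.gcd z w : ℕ) : ℤ) = (g : ℤ) * (Int.gcd z w : ℤ) := by push_cast; ring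
      rw [this, Int.gcd_mul_left, Int.natAbs_natCast]
    have hI : Int.gcd (Int.gcd z w) y = 1 := by
      have : g * 1 = g * Int.gcd (Int.gcd z w) y := by
        rw [mul_one, ← hfac, hgdef]
      exact (Nat.eq_of_mul_eq_mul_left hgpos this).symm
    set T : ℕ := Int.gcd (Int.gcd (Int.gcd x y) z) w with hTdef
    have dTw : (T : ℤ) ∣ w := (Int.gcd_dvd_right _ _)
    have dT1 : (T : ℤ) ∣ ((Int.gcd (Int.gcd x y) z : ℕ) : ℤ) := (Int.gcd_dvd_left _ _)
    have dTz : (T : ℤ) ∣ z := dT1.trans (Int.gcd_dvd_right _ _)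
    have dTy : (T : ℤ) ∣ y :=
      (dT1.trans (Int.gcd_dvd_left _ _)).trans (Int.gcd_dvd_right _ _)
    have : (T : ℤ) ∣ ((Int.gcd (Int.gcd z w) y : ℕ) : ℤ) :=
      Int.dvd_coe_gcd (Int.dvd_coe_gcd dTz dTw) dTy
    rw [hI] at this
    have : T ∣ 1 := by exact_mod_cast this
    exact Nat.dvd_one.mp this
  · -- lower bound
    show m ≤ y.natAbs
    have hE : g * y.natAbs = 2 * b.natAbs * m := by
      have h1 : Y.natAbs = g * y.natAbs := by
        rw [← hy, Int.natAbs_mul, Int.natAbs_natCast]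
      have h2 : Y.natAbs = 2 * b.natAbs * m := by
        rw [hYdef, hMdef, Int.natAbs_mul, Int.natAbs_mul]
        simp
      omega
    have hgle : g ≤ 2 * b.natAbs := by
      have hd2b : (g : ℤ) ∣ 2 * b := by
        have : (g : ℤ) ∣ Z + W := dvd_add hdZ hdW
        have h3 : Z + W = -(2 * b) := by rw [hZdef, hWdef]; ring
        rw [h3] at this
        exact (dvd_neg.mp this)
      have : ((g : ℤ)).natAbs ∣ (2 * b).natAbs := Int.natAbs_dvd_natAbs.mpr hd2b
      rw [Int.natAbs_natCast] at this
      have h2b : (2 * b).natAbs = 2 * b.natAbs := by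
        rw [Int.natAbs_mul]; simp
      rw [h2b] at this
      exact Nat.le_of_dvd (by omega) this
    have hbn : 0 < b.natAbs := Int.natAbs_pos.mpr hb
    have h5 : 2 * b.natAbs * m ≤ 2 * b.natAbs * y.natAbs := by
      calc 2 * b.natAbs * m = g * y.natAbs := hE.symm
        _ ≤ 2 * b.natAbs * y.natAbs := Nat.mul_le_mul hgle (le_refl _)
    exact Nat.le_of_mul_le_mul_left h5 (by omega)
  · -- upper bound
    show y.natAbs ≤ 2 * b.natAbs * m
    have hE : g * y.natAbs = 2 * b.natAbs * m := by
      have h1 : Y.natAbs = g * y.natAbs := by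
        rw [← hy, Int.natAbs_mul, Int.natAbs_natCast]
      have h2 : Y.natAbs = 2 * b.natAbs * m := by
        rw [hYdef, hMdef, Int.natAbs_mul, Int.natAbs_mul]
        simp
      omega
    calc y.natAbs ≤ g * y.natAbs := Nat.le_mul_of_pos_left _ hgpos
      _ = 2 * b.natAbs * m := hE

/-- Let `a` and `b` be nonzero coprime integers. Then there exist infinitely many
quadruples `(x, y, z, w)` of integers with `gcd(x, y, z, w) = 1` satisfying
`a*(x^2 - y^6) = b*(z^6 - w^6)` and `z^6 ≠ w^6`. -/
theorem stmt_3 (a b : ℤ) (ha : a ≠ 0) (hb : b ≠ 0) (hab : IsCoprime a b) :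
    {q : ℤ × ℤ × ℤ × ℤ |
      a * (q.1 ^ 2 - q.2.1 ^ 6) = b * (q.2.2.1 ^ 6 - q.2.2.2 ^ 6) ∧
      q.2.2.1 ^ 6 ≠ q.2.2.2 ^ 6 ∧
      Int.gcd (Int.gcd (Int.gcd q.1 q.2.1) q.2.2.1) q.2.2.2 = 1}.Infinite := by
  classical
  set B : ℕ := 2 * b.natAbs + 1 with hBdef
  have hBpow : ∀ n : ℕ, 1 ≤ B ^ (n + 1) := fun n => Nat.one_le_pow _ _ (by omega)
  choose f hf hlow hupp using fun n : ℕ => aux_stmt3 a b ha hb (B ^ (n + 1)) (hBpow n)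
  have hmono : StrictMono fun n => (f n).2.1.natAbs := by
    apply strictMono_nat_of_lt_succ
    intro n
    have h1 : (f n).2.1.natAbs ≤ 2 * b.natAbs * B ^ (n + 1) := hupp n
    have h2 : B ^ (n + 2) ≤ (f (n + 1)).2.1.natAbs := hlow (n + 1)
    have h3 : 2 * b.natAbs * B ^ (n + 1) < B ^ (n + 2) := by
      have : B ^ (n + 2) = B * B ^ (n + 1) := by ring
      rw [this]
      have hp : 0 < B ^ (n + 1) := hBpow n
      have : 2 * b.natAbs < B := by omega
      exact Nat.mul_lt_mul_of_lt_of_le this (le_refl _) hp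
    omega
  apply Set.infinite_of_injective_forall_mem
    (f := f)
  · intro n₁ n₂ h
    exact hmono.injective (by rw [h])
  · intro n
    exact hf n
end

section
/- Let a and b be nonzero integers and let n be a positive integer. Then the Diophantine equation a·(x² − y^(6n)) = b·(z⁶ − w⁶) has infinitely many solutions in integers (x, y, z, w) with z⁶ ≠ w⁶. -/
/-- Let `a` and `b` be nonzero integers and let `n` be a positive integer. Then the
Diophantine equation `a*(x^2 - y^(6n)) = b*(z^6 - w^6)` has infinitely many solutions
in integers `(x, y, z, w)` with `z^6 ≠ w^6`. -/
theorem stmt_4 (a b : ℤ) (ha : a ≠ 0) (hb : b ≠ 0) (n : ℕ) (hn : 0 < n) :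
    {q : ℤ × ℤ × ℤ × ℤ |
      a * (q.1 ^ 2 - q.2.1 ^ (6 * n)) = b * (q.2.2.1 ^ 6 - q.2.2.2 ^ 6) ∧
      q.2.2.1 ^ 6 ≠ q.2.2.2 ^ 6}.Infinite := by
  have hb2 : (-2 * b : ℤ) ≠ 0 := by
    intro h; apply hb; linarith [h]
  apply Set.infinite_of_injective_forall_mem
    (f := fun k : ℕ =>
      ((((-2*b)^(n-1) * ((k:ℤ)+1)^n))^3 * (2*b*(27*a^2+5*b^2)),
        -2*b*((k:ℤ)+1),
        ((-2*b)^(n-1) * ((k:ℤ)+1)^n) * (3*a+b),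
        ((-2*b)^(n-1) * ((k:ℤ)+1)^n) * (b-3*a)))
  · intro k1 k2 h
    simp only [Prod.mk.injEq] at h
    have h2 : (-2*b) * ((k1:ℤ)+1) = (-2*b) * ((k2:ℤ)+1) := h.2.1
    have h3 : ((k1:ℤ)+1) = ((k2:ℤ)+1) := mul_left_cancel₀ hb2 h2
    have : (k1:ℤ) = (k2:ℤ) := by linarith
    exact_mod_cast this
  · intro k
    obtain ⟨m, rfl⟩ : ∃ m, n = m + 1 := ⟨n - 1, (Nat.succ_pred_eq_of_pos hn).symm⟩
    simp only [Nat.add_sub_cancel]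
    set t : ℤ := (k:ℤ) + 1 with ht
    have htne : t ≠ 0 := by positivity
    set L : ℤ := (-2*b)^m * t^(m+1) with hL
    have hLne : L ≠ 0 := mul_ne_zero (pow_ne_zero _ hb2) (pow_ne_zero _ htne)
    have hy : (-2*b*t)^(6*(m+1)) = ((-2*b) * L)^6 := by
      rw [show 6*(m+1) = (m+1)*6 from mul_comm _ _, pow_mul]
      congr 1
      rw [hL, mul_pow, pow_succ (-2*b) m]
      ring
    constructor
    · show a * ((L^3 * (2*b*(27*a^2+5*b^2)))^2 - (-2*b*t)^(6*(m+1)))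
        = b * ((L*(3*a+b))^6 - (L*(b-3*a))^6)
      rw [hy]; ring
    · show (L*(3*a+b))^6 ≠ (L*(b-3*a))^6
      intro h
      have key : (L*(3*a+b))^6 - (L*(b-3*a))^6
          = L^6 * (36*a*b*((3*a^2+b^2)*(27*a^2+b^2))) := by ring
      have h0 : L^6 * (36*a*b*((3*a^2+b^2)*(27*a^2+b^2))) = 0 := by
        rw [← key, h]; ring
      have hb2pos : (0:ℤ) < b^2 := by positivity
      have h1 : (3*a^2+b^2 : ℤ) ≠ 0 := by nlinarith [sq_nonneg a]
      have h2 : (27*a^2+b^2 : ℤ) ≠ 0 := by nlinarith [sq_nonneg a]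
      have : L^6 * (36*a*b*((3*a^2+b^2)*(27*a^2+b^2))) ≠ 0 := by
        apply mul_ne_zero (pow_ne_zero _ hLne)
        apply mul_ne_zero
        · apply mul_ne_zero (mul_ne_zero (by norm_num) ha) hb
        · exact mul_ne_zero h1 h2
      exact this h0
end

section
/- The set of triples (x, y, z) ∈ ℚ³ satisfying x² + y⁶ = 2·(z⁶ + 1) is infinite. -/
/-- Tangent-line duplication on the cubic `373 p³ + 23 q³ = 527 r³`. -/
def stp19 (P : ℤ × ℤ × ℤ) : ℤ × ℤ × ℤ :=
  (P.1 * (23 * P.2.1 ^ 3 + 527 * P.2.2 ^ 3),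
   P.2.1 * (-(527 * P.2.2 ^ 3) - 373 * P.1 ^ 3),
   P.2.2 * (373 * P.1 ^ 3 - 23 * P.2.1 ^ 3))

def pt19 : ℕ → ℤ × ℤ × ℤ
  | 0 => (5, 18, 7)
  | n + 1 => stp19 (pt19 n)

lemma mod84a19 {p : ℤ} (h : p % 8 = 5) : p ≡ 1 [ZMOD 4] := show p % 4 = 1 % 4 by omega

lemma mod84b19 {r : ℤ} (h : r % 8 = 7) : r ≡ 3 [ZMOD 4] := show r % 4 = 3 % 4 by omega

lemma ex19 {A : ℤ} (h : A % 4 = 2) : ∃ k : ℤ, A = 4 * k + 2 := ⟨(A - 2) / 4, by omega⟩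

lemma oddneg19 {u k : ℤ} (hu : u % 2 = 1) : -(u * (2 * k + 1)) % 2 = 1 := by
  obtain ⟨a, rfl⟩ : ∃ a : ℤ, u = 2 * a + 1 := ⟨(u - 1) / 2, by omega⟩
  have h : -((2 * a + 1) * (2 * k + 1)) = 2 * (-(2 * a * k + a + k)) - 1 := by ring
  omega

lemma odd_mul19 {a b : ℤ} (ha : a % 2 = 1) (hb : b % 2 = 1) : (a * b) % 2 = 1 := by
  obtain ⟨s, rfl⟩ : ∃ s : ℤ, a = 2 * s + 1 := ⟨(a - 1) / 2, by omega⟩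
  obtain ⟨t, rfl⟩ : ∃ t : ℤ, b = 2 * t + 1 := ⟨(b - 1) / 2, by omega⟩
  have h : (2 * s + 1) * (2 * t + 1) = 2 * (2 * s * t + s + t) + 1 := by ring
  omega

lemma nonzero19 {r : ℤ} (h : r % 8 = 7) : r ≠ 0 := by omega

lemma odd_of_mod8_19 {r : ℤ} (h : r % 8 = 7) : r % 2 = 1 := by omega

lemma contra19 {x : ℤ} (h1 : x % 2 = 1) (h2 : (2 : ℤ) ∣ x) : False := by omega

lemma key19 (n : ℕ) :
    373 * (pt19 n).1 ^ 3 + 23 * (pt19 n).2.1 ^ 3 = 527 * (pt19 n).2.2 ^ 3 ∧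
    (pt19 n).1 % 8 = 5 ∧ (pt19 n).2.2 % 8 = 7 ∧
    ∃ u : ℤ, u % 2 = 1 ∧ (pt19 n).2.1 = 2 ^ (n + 1) * u := by
  induction n with
  | zero => exact ⟨by norm_num [pt19], by norm_num [pt19], by norm_num [pt19],
      9, by norm_num, by norm_num [pt19]⟩
  | succ n ih =>
    obtain ⟨h1, h2, h3, u, hu, hq⟩ := ih
    set p := (pt19 n).1 with hp
    set q := (pt19 n).2.1 with hqdef
    set r := (pt19 n).2.2 with hr
    have hpt : pt19 (n + 1) =
        (p * (23 * q ^ 3 + 527 * r ^ 3),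
         q * (-(527 * r ^ 3) - 373 * p ^ 3),
         r * (373 * p ^ 3 - 23 * q ^ 3)) := rfl
    rw [hpt]
    clear_value p q r
    have hq3 : q ^ 3 ≡ 0 [ZMOD 8] := Int.modEq_zero_iff_dvd.mpr
      ⟨2 ^ (3 * n) * u ^ 3, by rw [hq]; ring⟩
    have hpm : p ≡ 5 [ZMOD 8] := show p % 8 = 5 % 8 by rw [h2]; decide
    have hrm : r ≡ 7 [ZMOD 8] := show r % 8 = 7 % 8 by rw [h3]; decide
    refine ⟨?_, ?_, ?_, ?_⟩
    · -- the cubic equation is preserved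
      simp only
      linear_combination (-3199967 * p^6 * q^3 - 73320983 * p^6 * r^3 + 197317 * p^3 * q^6
        - 103592917 * p^3 * r^6 + 278783 * q^6 * r^3 + 6387767 * q^3 * r^6) * h1
    · -- p' ≡ 5 [mod 8]
      show p * (23 * q ^ 3 + 527 * r ^ 3) % 8 = 5
      have h' : p * (23 * q ^ 3 + 527 * r ^ 3) % 8 = (5 * (23 * 0 + 527 * 7 ^ 3) : ℤ) % 8 :=
        hpm.mul ((hq3.mul_left 23).add ((hrm.pow 3).mul_left 527))
      rw [h']; decide
    · -- r' ≡ 7 [mod 8]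
      show r * (373 * p ^ 3 - 23 * q ^ 3) % 8 = 7
      have h' : r * (373 * p ^ 3 - 23 * q ^ 3) % 8 = (7 * (373 * 5 ^ 3 - 23 * 0) : ℤ) % 8 :=
        hrm.mul (((hpm.pow 3).mul_left 373).sub (hq3.mul_left 23))
      rw [h']; decide
    · -- 2-adic valuation of q grows by exactly one
      simp only
      have hmm : 373 * p ^ 3 + 527 * r ^ 3 ≡ 373 * 1 ^ 3 + 527 * 3 ^ 3 [ZMOD 4] :=
        (((mod84a19 h2).pow 3).mul_left 373).add (((mod84b19 h3).pow 3).mul_left 527)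
      have hA : (373 * p ^ 3 + 527 * r ^ 3) % 4 = 2 := by
        have h' : (373 * p ^ 3 + 527 * r ^ 3) % 4 = (373 * 1 ^ 3 + 527 * 3 ^ 3 : ℤ) % 4 := hmm
        rw [h']; decide
      obtain ⟨k, hk⟩ := ex19 hA
      refine ⟨-(u * (2 * k + 1)), oddneg19 hu, ?_⟩
      have h5 : -(527 * r ^ 3) - 373 * p ^ 3 = -(4 * k + 2) := by linear_combination -hk
      rw [hq, h5]; ring

/-- The set of triples `(x, y, z) ∈ ℚ³` satisfying `x^2 + y^6 = 2*(z^6 + 1)` is infinite. -/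
theorem stmt_19 :
    {p : ℚ × ℚ × ℚ | p.1 ^ 2 + p.2.1 ^ 6 = 2 * (p.2.2 ^ 6 + 1)}.Infinite := by
  apply Set.infinite_of_injective_forall_mem
    (f := fun n : ℕ =>
      (((527 * (pt19 n).2.1 ^ 3 + 23 * (pt19 n).2.2 ^ 3 : ℤ) : ℚ) / (373 * ((pt19 n).2.2 : ℚ) ^ 3),
       ((pt19 n).1 : ℚ) / ((pt19 n).2.2 : ℚ),
       ((pt19 n).2.1 : ℚ) / ((pt19 n).2.2 : ℚ)))
  · -- injectivity
    intro n m hnm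
    obtain ⟨h1n, h2n, h3n, un, hun, hqn⟩ := key19 n
    obtain ⟨h1m, h2m, h3m, um, hum, hqm⟩ := key19 m
    have hrn : ((pt19 n).2.2 : ℚ) ≠ 0 := Int.cast_ne_zero.mpr (nonzero19 h3n)
    have hrm : ((pt19 m).2.2 : ℚ) ≠ 0 := Int.cast_ne_zero.mpr (nonzero19 h3m)
    have hz : ((pt19 n).2.1 : ℚ) / ((pt19 n).2.2 : ℚ)
        = ((pt19 m).2.1 : ℚ) / ((pt19 m).2.2 : ℚ) := congrArg (fun p => p.2.2) hnm
    rw [div_eq_div_iff hrn hrm] at hz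
    have hz' : (pt19 n).2.1 * (pt19 m).2.2 = (pt19 m).2.1 * (pt19 n).2.2 := by exact_mod_cast hz
    rw [hqn, hqm] at hz'
    by_contra hne
    rcases lt_or_gt_of_ne (fun h : n = m => hne h) with h | h
    · have key : un * (pt19 m).2.2 = 2 ^ (m - n) * (um * (pt19 n).2.2) := by
        have h2 : (2 : ℤ) ^ (n + 1) * (un * (pt19 m).2.2)
            = 2 ^ (n + 1) * (2 ^ (m - n) * (um * (pt19 n).2.2)) := by
          have he : m + 1 = (n + 1) + (m - n) := by omega
          rw [he, pow_add] at hz'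
          linear_combination hz'
        exact mul_left_cancel₀ (by positivity) h2
      have hodd := odd_mul19 hun (odd_of_mod8_19 h3m)
      have heven : (2 : ℤ) ∣ 2 ^ (m - n) * (um * (pt19 n).2.2) :=
        Dvd.dvd.mul_right (dvd_pow_self 2 (by omega : m - n ≠ 0)) _
      rw [← key] at heven
      exact contra19 hodd heven
    · have key : um * (pt19 n).2.2 = 2 ^ (n - m) * (un * (pt19 m).2.2) := by
        have h2 : (2 : ℤ) ^ (m + 1) * (um * (pt19 n).2.2)
            = 2 ^ (m + 1) * (2 ^ (n - m) * (un * (pt19 m).2.2)) := by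
          have he : n + 1 = (m + 1) + (n - m) := by omega
          rw [he, pow_add] at hz'
          linear_combination -hz'
        exact mul_left_cancel₀ (by positivity) h2
      have hodd := odd_mul19 hum (odd_of_mod8_19 h3n)
      have heven : (2 : ℤ) ∣ 2 ^ (n - m) * (un * (pt19 m).2.2) :=
        Dvd.dvd.mul_right (dvd_pow_self 2 (by omega : n - m ≠ 0)) _
      rw [← key] at heven
      exact contra19 hodd heven
  · -- membership
    intro n
    obtain ⟨h1, h2, h3, _⟩ := key19 n
    set p := (pt19 n).1
    set q := (pt19 n).2.1
    set r := (pt19 n).2.2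
    have hr : (r : ℚ) ≠ 0 := Int.cast_ne_zero.mpr (nonzero19 h3)
    have h1q : 373 * (p : ℚ) ^ 3 + 23 * (q : ℚ) ^ 3 = 527 * (r : ℚ) ^ 3 := by
      exact_mod_cast h1
    clear_value p q r
    show (((527 * q ^ 3 + 23 * r ^ 3 : ℤ) : ℚ) / (373 * (r : ℚ) ^ 3)) ^ 2
        + ((p : ℚ) / (r : ℚ)) ^ 6 = 2 * (((q : ℚ) / (r : ℚ)) ^ 6 + 1)
    push_cast
    field_simp
    linear_combination ((373 * (p : ℚ) ^ 3 + 527 * (r : ℚ) ^ 3 - 23 * (q : ℚ) ^ 3)) * h1q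
end
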